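/- Let Γ be a generalized quadrangle and O a set of regular points of Γ satisfying: (PP) at least one member of O is projective; (TP) for all opposite points x,y of Γ, |{x,y}^⊥ ∩ O| ≠ 1. Then every element of O is a projective point. -/
import Mathlib


/-- A (thick) generalized quadrangle. -/
structure GenQuadrangle where
  P : Type
  Ln : Type
  inc : P → Ln → Prop
  /-- (PL): no pair of distinct points is incident with a pair of distinct lines -/
  pl : ∀ ⦃x y : P⦄ ⦃l m : Ln⦄, inc x l → inc y l → inc x m → inc y m → x = y ∨ l = m
  /-- thickness: every point is incident with at least three lines -/
  thickPt : ∀ x : P, ∃ l₁ l₂ l₃ : Ln, l₁ ≠ l₂ ∧ l₁ ≠ l₃ ∧ l₂ ≠ l₃ ∧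
    inc x l₁ ∧ inc x l₂ ∧ inc x l₃
  /-- thickness: every line is incident with at least three points -/
  thickLn : ∀ l : Ln, ∃ x₁ x₂ x₃ : P, x₁ ≠ x₂ ∧ x₁ ≠ x₃ ∧ x₂ ≠ x₃ ∧
    inc x₁ l ∧ inc x₂ l ∧ inc x₃ l
  /-- (GQ): for every non-incident point-line pair (x,l) there are a unique point y
  and a unique line m with x I m I y I l -/
  gq : ∀ (x : P) (l : Ln), ¬ inc x l → ∃! q : P × Ln, inc x q.2 ∧ inc q.1 q.2 ∧ inc q.1 l

namespace GenQuadrangle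

variable (G : GenQuadrangle)

/-- Two points are collinear if some line is incident with both. -/
def collinear (x y : G.P) : Prop := ∃ l : G.Ln, G.inc x l ∧ G.inc y l

/-- Two points are opposite if they are not collinear. -/
def opp (x y : G.P) : Prop := ¬ G.collinear x y

/-- The perp {x,y}^⊥ of a pair of points. -/
def perp (x y : G.P) : Set G.P := {z | G.collinear z x ∧ G.collinear z y}

/-- X^⊥ for a set of points X. -/
def perpSet (S : Set G.P) : Set G.P := {z | ∀ u ∈ S, G.collinear z u}

/-- The span {x,y}^⊥⊥ of a pair of points. -/
def span (x y : G.P) : Set G.P := G.perpSet (G.perp x y)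

/-- A point x is regular if every span {x,y}^⊥⊥ (y opposite x) is a perp of a pair
of opposite points. -/
def regular (x : G.P) : Prop :=
  ∀ y : G.P, G.opp x y → ∃ u v : G.P, G.opp u v ∧ G.span x y = G.perp u v

/-- A point x is projective if it is regular and every pair of distinct perps
through x meets in a unique point (i.e. the dual net Γ*_x is a dual affine plane). -/
def projective (x : G.P) : Prop :=
  G.regular x ∧ ∀ y z : G.P, G.opp x y → G.opp x z → G.perp x y ≠ G.perp x z →
    ∃! w : G.P, w ∈ G.perp x y ∧ w ∈ G.perp x z

/-- A triad: three pairwise opposite points. -/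
def triad (x y z : G.P) : Prop := G.opp x y ∧ G.opp y z ∧ G.opp x z

/-- A center of a triad: a point collinear with all three. -/
def center (w x y z : G.P) : Prop := G.collinear w x ∧ G.collinear w y ∧ G.collinear w z

end GenQuadrangle

/- ===================  auxiliary lemmas  =================== -/

namespace GenQuadrangle

variable (G : GenQuadrangle)

lemma collinear_refl (x : G.P) : G.collinear x x := by
  obtain ⟨l₁, l₂, l₃, _, _, _, h₁, _, _⟩ := G.thickPt x
  exact ⟨l₁, h₁, h₁⟩

lemma collinear_symm {x y : G.P} (h : G.collinear x y) : G.collinear y x := by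
  obtain ⟨l, hx, hy⟩ := h; exact ⟨l, hy, hx⟩

lemma opp_symm {x y : G.P} (h : G.opp x y) : G.opp y x :=
  fun c => h (G.collinear_symm c)

lemma opp_ne {x y : G.P} (h : G.opp x y) : x ≠ y := by
  rintro rfl; exact h (G.collinear_refl x)

lemma line_eq {x y : G.P} {l m : G.Ln} (hxy : x ≠ y)
    (h1 : G.inc x l) (h2 : G.inc y l) (h3 : G.inc x m) (h4 : G.inc y m) : l = m :=
  (G.pl h1 h2 h3 h4).resolve_left hxy

/-- Projection of a point on a line: existence and uniqueness. -/
lemma proj_pt (p : G.P) (l : G.Ln) (h : ¬ G.inc p l) :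
    ∃ z, (G.inc z l ∧ G.collinear z p) ∧ ∀ z', G.inc z' l → G.collinear z' p → z' = z := by
  obtain ⟨q, ⟨hq1, hq2, hq3⟩, huniq⟩ := G.gq p l h
  refine ⟨q.1, ⟨hq3, ⟨q.2, hq2, hq1⟩⟩, ?_⟩
  intro z' hz' hcol
  obtain ⟨m, hz'm, hpm⟩ := hcol
  have := huniq (z', m) ⟨hpm, hz'm, hz'⟩
  exact congrArg Prod.fst this

lemma no_triangle {a b c : G.P} {l : G.Ln} (ha : G.inc a l) (hb : G.inc b l) (hab : a ≠ b)
    (hc : ¬ G.inc c l) (hca : G.collinear c a) (hcb : G.collinear c b) : False := by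
  obtain ⟨z, _, huniq⟩ := G.proj_pt c l hc
  have h1 := huniq a ha (G.collinear_symm hca)
  have h2 := huniq b hb (G.collinear_symm hcb)
  exact hab (h1.trans h2.symm)

lemma opp_of_mem_perp {u v z z' : G.P} (huv : G.opp u v)
    (hz : z ∈ G.perp u v) (hz' : z' ∈ G.perp u v) (hne : z ≠ z') : G.opp z z' := by
  intro hcol
  obtain ⟨m, h1, h2⟩ := hcol
  have hum : G.inc u m := by
    by_contra hu
    exact G.no_triangle h1 h2 hne hu (G.collinear_symm hz.1) (G.collinear_symm hz'.1)
  have hvm : G.inc v m := by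
    by_contra hv
    exact G.no_triangle h1 h2 hne hv (G.collinear_symm hz.2) (G.collinear_symm hz'.2)
  exact huv ⟨m, hum, hvm⟩

/-- On each line through y there is a unique point of {y,c}^⊥ (c opposite y). -/
lemma perp_on_line {y c : G.P} {l : G.Ln} (h : G.opp y c) (hy : G.inc y l) :
    ∃ w, (w ∈ G.perp y c ∧ G.inc w l) ∧ ∀ w', w' ∈ G.perp y c → G.inc w' l → w' = w := by
  have hcl : ¬ G.inc c l := fun hc => h ⟨l, hy, hc⟩
  obtain ⟨z, ⟨hzl, hzc⟩, huniq⟩ := G.proj_pt c l hcl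
  refine ⟨z, ⟨⟨⟨l, hzl, hy⟩, hzc⟩, hzl⟩, ?_⟩
  intro w' hw' hl'
  exact huniq w' hl' hw'.2

lemma perp_eq_of_subset {y a b : G.P} (hya : G.opp y a) (hyb : G.opp y b)
    (hsub : G.perp y a ⊆ G.perp y b) : G.perp y a = G.perp y b := by
  apply Set.Subset.antisymm hsub
  intro w hw
  have hwne : w ≠ y := by rintro rfl; exact hyb hw.2
  obtain ⟨l, hwl, hyl⟩ := hw.1
  obtain ⟨w₀, ⟨hw₀, hw₀l⟩, _⟩ := G.perp_on_line hya hyl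
  obtain ⟨w₁, ⟨hw₁, hw₁l⟩, huniq⟩ := G.perp_on_line hyb hyl
  have e1 : w = w₁ := huniq w hw hwl
  have e2 : w₀ = w₁ := huniq w₀ (hsub hw₀) hw₀l
  rw [e1, ← e2]; exact hw₀

lemma self_mem_span_left {y c : G.P} : y ∈ G.span y c :=
  fun w hw => G.collinear_symm hw.1

lemma self_mem_span_right {y c : G.P} : c ∈ G.span y c :=
  fun w hw => G.collinear_symm hw.2

/-- If z ∈ {y,c}^⊥⊥ and z ≠ y then z is opposite y and {y,z}^⊥ = {y,c}^⊥. -/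
lemma span_perp_eq {y c z : G.P} (hyc : G.opp y c) (hz : z ∈ G.span y c) (hzy : z ≠ y) :
    G.opp y z ∧ G.perp y z = G.perp y c := by
  have hopp : G.opp y z := by
    intro hcol
    obtain ⟨l₀, hyl₀, hzl₀⟩ := hcol
    obtain ⟨l₁, l₂, l₃, h12, _, _, hi1, hi2, _⟩ := G.thickPt y
    have hl' : ∃ l', G.inc y l' ∧ l' ≠ l₀ := by
      by_cases e1 : l₁ = l₀
      · by_cases e2 : l₂ = l₀
        · exact absurd (e1.trans e2.symm) h12
        · exact ⟨l₂, hi2, e2⟩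
      · exact ⟨l₁, hi1, e1⟩
    obtain ⟨l', hyl', hne⟩ := hl'
    obtain ⟨w, ⟨hw, hwl'⟩, _⟩ := G.perp_on_line hyc hyl'
    have hwy : w ≠ y := by rintro rfl; exact hyc hw.2
    have hznl' : ¬ G.inc z l' := by
      intro hz'
      exact hne (G.line_eq hzy hzl₀ hyl₀ hz' hyl').symm
    exact G.no_triangle hwl' hyl' hwy hznl' (hz w hw) ⟨l₀, hzl₀, hyl₀⟩
  refine ⟨hopp, ?_⟩
  have hsub : G.perp y c ⊆ G.perp y z := fun w hw => ⟨hw.1, G.collinear_symm (hz w hw)⟩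
  exact (G.perp_eq_of_subset hyc hopp hsub).symm

/-- Two distinct common points of two perps through a projective point force the
perps to coincide. -/
lemma perp_x_eq {x c d w₁ w₂ : G.P} (hx : G.projective x) (hc : G.opp x c) (hd : G.opp x d)
    (h1c : w₁ ∈ G.perp x c) (h1d : w₁ ∈ G.perp x d)
    (h2c : w₂ ∈ G.perp x c) (h2d : w₂ ∈ G.perp x d)
    (hne : w₁ ≠ w₂) : G.perp x c = G.perp x d := by
  by_contra hpe
  obtain ⟨w, _, huniq⟩ := hx.2 c d hc hd hpe
  exact hne ((huniq w₁ ⟨h1c, h1d⟩).trans (huniq w₂ ⟨h2c, h2d⟩).symm)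

lemma exists_line_ne (x : G.P) (l : G.Ln) : ∃ m, G.inc x m ∧ m ≠ l := by
  obtain ⟨l₁, l₂, l₃, h12, _, _, hi1, hi2, _⟩ := G.thickPt x
  by_cases e1 : l₁ = l
  · by_cases e2 : l₂ = l
    · exact absurd (e1.trans e2.symm) h12
    · exact ⟨l₂, hi2, e2⟩
  · exact ⟨l₁, hi1, e1⟩

lemma exists_pt_on_line_ne (l : G.Ln) (p₁ p₂ : G.P) :
    ∃ z, G.inc z l ∧ z ≠ p₁ ∧ z ≠ p₂ := by
  obtain ⟨x₁, x₂, x₃, h12, h13, h23, hi1, hi2, hi3⟩ := G.thickLn l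
  by_cases e1 : x₁ = p₁
  · by_cases e2 : x₂ = p₂
    · refine ⟨x₃, hi3, ?_, ?_⟩
      · rw [← e1]; exact h13.symm
      · rw [← e2]; exact h23.symm
    · exact ⟨x₂, hi2, by rw [← e1]; exact h12.symm, e2⟩
  · by_cases e2 : x₁ = p₂
    · by_cases e3 : x₂ = p₁
      · refine ⟨x₃, hi3, ?_, ?_⟩
        · rw [← e3]; exact h23.symm
        · rw [← e2]; exact h13.symm
      · exact ⟨x₂, hi2, e3, by rw [← e2]; exact h12.symm⟩
    · exact ⟨x₁, hi1, e1, e2⟩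

lemma opp_of_two_lines {p a b : G.P} {m n : G.Ln} (hpm : G.inc p m) (hpn : G.inc p n)
    (ham : G.inc a m) (hbn : G.inc b n) (hmn : m ≠ n) (hap : a ≠ p) (hbp : b ≠ p) :
    G.opp a b := by
  intro hcol
  have hab : a ≠ b := by
    rintro rfl
    exact hmn (G.line_eq hap ham hpm hbn hpn)
  obtain ⟨k, hak, hbk⟩ := hcol
  have hpk : ¬ G.inc p k := by
    intro hpk
    have hmk : m = k := G.line_eq hap ham hpm hak hpk
    have hbm : G.inc b m := hmk.symm ▸ hbk
    exact hmn (G.line_eq hbp hbm hpm hbn hpn)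
  exact G.no_triangle hak hbk hab hpk ⟨m, hpm, ham⟩ ⟨n, hpn, hbn⟩

/-- Existence of a common neighbour of y, z₁, z₂ where z₁, z₂ are collinear with
the projective point x opposite y. -/
lemma special_exists {x y z₁ z₂ : G.P} (hx : G.projective x) (hxy : G.opp x y)
    (h1 : G.collinear z₁ x) (h2 : G.collinear z₂ x)
    (o1 : G.opp y z₁) (o2 : G.opp y z₂) (h12 : z₁ ≠ z₂) :
    ∃ θ, θ ∈ G.perp y z₁ ∧ θ ∈ G.perp y z₂ := by
  by_cases hc : G.collinear z₁ z₂
  · -- z₁ and z₂ collinear: project y on the joining line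
    obtain ⟨l, hl1, hl2⟩ := hc
    have hyl : ¬ G.inc y l := fun h => o1 ⟨l, h, hl1⟩
    obtain ⟨θ, ⟨hθl, hθy⟩, _⟩ := G.proj_pt y l hyl
    exact ⟨θ, ⟨hθy, ⟨l, hθl, hl1⟩⟩, ⟨hθy, ⟨l, hθl, hl2⟩⟩⟩
  · -- z₁ opposite z₂
    have hz₁x : z₁ ≠ x := by
      rintro rfl; exact hc (G.collinear_symm h2)
    have hxperp : x ∈ G.perp z₁ z₂ := ⟨G.collinear_symm h1, G.collinear_symm h2⟩
    obtain ⟨e, hz₁e, hxe⟩ := id h1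
    obtain ⟨l', hz₁l', hl'e⟩ := G.exists_line_ne z₁ e
    have hz₂l' : ¬ G.inc z₂ l' := fun h => hc ⟨l', hz₁l', h⟩
    obtain ⟨w, ⟨hwl', hwz₂⟩, _⟩ := G.proj_pt z₂ l' hz₂l'
    have hwz₁ : w ≠ z₁ := by rintro rfl; exact hc hwz₂
    have hcwz₁ : G.collinear w z₁ := ⟨l', hwl', hz₁l'⟩
    have hwperp : w ∈ G.perp z₁ z₂ := ⟨hcwz₁, hwz₂⟩
    have hwx : w ≠ x := by
      rintro rfl
      exact hl'e (G.line_eq hz₁x.symm hwl' hz₁l' hxe hz₁e)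
    have hoxw : G.opp x w := G.opp_of_mem_perp hc hxperp hwperp (Ne.symm hwx)
    by_cases hwy : G.collinear w y
    · exact ⟨w, ⟨hwy, hcwz₁⟩, ⟨hwy, hwz₂⟩⟩
    · -- w is opposite y; use x-projectivity twice
      have hpne : G.perp x y ≠ G.perp x w := by
        intro he
        have hz₁w : z₁ ∈ G.perp x w := ⟨h1, G.collinear_symm hcwz₁⟩
        have : z₁ ∈ G.perp x y := he.symm ▸ hz₁w
        exact o1 (G.collinear_symm this.2)
      obtain ⟨ps, ⟨hp1, hp2⟩, _⟩ := hx.2 y w hxy hoxw hpne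
      have hpsz₁ : ps ≠ z₁ := by
        rintro rfl; exact o1 (G.collinear_symm hp1.2)
      have hz₁pxw : z₁ ∈ G.perp x w := ⟨h1, G.collinear_symm hcwz₁⟩
      have hopsz₁ : G.opp ps z₁ := G.opp_of_mem_perp hoxw hp2 hz₁pxw hpsz₁
      have hpsy : ps ≠ y := by
        rintro rfl; exact hxy (G.collinear_symm hp1.1)
      obtain ⟨f, hpf, hyf⟩ := hp1.2
      have hz₁f : ¬ G.inc z₁ f := fun hif => o1 ⟨f, hyf, hif⟩
      obtain ⟨θ, ⟨hθf, hθz₁⟩, _⟩ := G.proj_pt z₁ f hz₁f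
      have hθy : θ ≠ y := by
        rintro rfl; exact o1 hθz₁
      have hcθy : G.collinear θ y := ⟨f, hθf, hyf⟩
      have hθps : θ ≠ ps := by
        rintro rfl; exact hopsz₁ hθz₁
      have hcθps : G.collinear θ ps := ⟨f, hθf, hpf⟩
      have hoxθ : G.opp x θ := by
        intro hcolxθ
        have hxf : ¬ G.inc x f := fun h => hxy ⟨f, h, hyf⟩
        obtain ⟨z₀, _, hu⟩ := G.proj_pt x f hxf
        have e1 := hu θ hθf (G.collinear_symm hcolxθ)
        have e2 := hu ps hpf hp1.1
        exact hθps (e1.trans e2.symm)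
      have heq : G.perp x θ = G.perp x w := by
        refine G.perp_x_eq hx hoxθ hoxw ?_ hz₁pxw ?_ hp2 (Ne.symm hpsz₁)
        · exact ⟨h1, G.collinear_symm hθz₁⟩
        · exact ⟨hp1.1, G.collinear_symm hcθps⟩
      have hz₂pxw : z₂ ∈ G.perp x w := ⟨h2, G.collinear_symm hwz₂⟩
      have hz₂θ : z₂ ∈ G.perp x θ := heq.symm ▸ hz₂pxw
      exact ⟨θ, ⟨hcθy, hθz₁⟩, ⟨hcθy, G.collinear_symm hz₂θ.2⟩⟩

/-- Uniqueness of the common neighbour in the special situation. -/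
lemma special_unique {x y z₁ z₂ θ θ' : G.P} (hx : G.projective x) (hxy : G.opp x y)
    (h1 : G.collinear z₁ x) (h2 : G.collinear z₂ x)
    (o1 : G.opp y z₁) (o2 : G.opp y z₂) (h12 : z₁ ≠ z₂)
    (t1 : θ ∈ G.perp y z₁) (t2 : θ ∈ G.perp y z₂)
    (t1' : θ' ∈ G.perp y z₁) (t2' : θ' ∈ G.perp y z₂) : θ = θ' := by
  by_contra hne
  by_cases hc : G.collinear z₁ z₂
  · obtain ⟨l, hl1, hl2⟩ := hc
    have hyl : ¬ G.inc y l := fun h => o1 ⟨l, h, hl1⟩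
    have hθl : G.inc θ l := by
      by_contra h
      exact G.no_triangle hl1 hl2 h12 h t1.2 t2.2
    have hθ'l : G.inc θ' l := by
      by_contra h
      exact G.no_triangle hl1 hl2 h12 h t1'.2 t2'.2
    obtain ⟨z₀, _, hu⟩ := G.proj_pt y l hyl
    exact hne ((hu θ hθl t1.1).trans (hu θ' hθ'l t1'.1).symm)
  · have hθmem : θ ∈ G.perp z₁ z₂ := ⟨t1.2, t2.2⟩
    have hθ'mem : θ' ∈ G.perp z₁ z₂ := ⟨t1'.2, t2'.2⟩
    have hxmem : x ∈ G.perp z₁ z₂ := ⟨G.collinear_symm h1, G.collinear_symm h2⟩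
    have hθx : θ ≠ x := by
      rintro rfl; exact hxy t1.1
    have hθ'x : θ' ≠ x := by
      rintro rfl; exact hxy t1'.1
    have hoθθ' : G.opp θ θ' := G.opp_of_mem_perp hc hθmem hθ'mem hne
    have hoxθ : G.opp x θ := G.opp_of_mem_perp hc hxmem hθmem (Ne.symm hθx)
    have hoxθ' : G.opp x θ' := G.opp_of_mem_perp hc hxmem hθ'mem (Ne.symm hθ'x)
    have heq : G.perp x θ = G.perp x θ' := by
      refine G.perp_x_eq hx hoxθ hoxθ' ?_ ?_ ?_ ?_ h12
      · exact ⟨h1, G.collinear_symm t1.2⟩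
      · exact ⟨h1, G.collinear_symm t1'.2⟩
      · exact ⟨h2, G.collinear_symm t2.2⟩
      · exact ⟨h2, G.collinear_symm t2'.2⟩
    have hθy : θ ≠ y := by
      rintro rfl; exact o1 t1.2
    obtain ⟨g, hθg, hyg⟩ := t1.1
    have hxg : ¬ G.inc x g := fun h => hxy ⟨g, h, hyg⟩
    obtain ⟨k, ⟨hkg, hkx⟩, _⟩ := G.proj_pt x g hxg
    have hky : k ≠ y := by
      rintro rfl; exact hxy (G.collinear_symm hkx)
    have hkθ : k ≠ θ := by
      rintro rfl; exact hoxθ (G.collinear_symm hkx)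
    have hkperp : k ∈ G.perp x θ := ⟨hkx, ⟨g, hkg, hθg⟩⟩
    have hkθ' : G.collinear k θ' := (heq ▸ hkperp).2
    have hθ'g : ¬ G.inc θ' g := by
      intro h
      exact hoθθ' ⟨g, hθg, h⟩
    exact G.no_triangle hyg hkg hky.symm hθ'g t1'.1 (G.collinear_symm hkθ')

/-- For a regular point y opposite a projective point x, every span {y,a}^⊥⊥ contains
a point collinear with x. -/
lemma xrep {x y a : G.P} (hx : G.projective x) (hxy : G.opp x y)
    (hyreg : G.regular y) (ha : G.opp y a) :
    ∃ z, G.collinear z x ∧ z ∈ G.span y a := by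
  obtain ⟨u, v, huv, hspan⟩ := hyreg a ha
  have hy_span : y ∈ G.span y a := G.self_mem_span_left
  have ha_span : a ∈ G.span y a := G.self_mem_span_right
  have hy_uv : y ∈ G.perp u v := hspan ▸ hy_span
  have ha_uv : a ∈ G.perp u v := hspan ▸ ha_span
  have hu_perp : u ∈ G.perp y a := ⟨G.collinear_symm hy_uv.1, G.collinear_symm ha_uv.1⟩
  have hv_perp : v ∈ G.perp y a := ⟨G.collinear_symm hy_uv.2, G.collinear_symm ha_uv.2⟩
  by_cases hax : G.collinear a x
  · exact ⟨a, hax, ha_span⟩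
  have hoxa : G.opp x a := fun h => hax (G.collinear_symm h)
  by_cases hux : G.collinear u x
  · by_cases hvx : G.collinear v x
    · -- both u,v collinear with x : then perp x a = perp x y and x works
      have hu_xa : u ∈ G.perp x a := ⟨hux, hu_perp.2⟩
      have hu_xy : u ∈ G.perp x y := ⟨hux, hu_perp.1⟩
      have hv_xa : v ∈ G.perp x a := ⟨hvx, hv_perp.2⟩
      have hv_xy : v ∈ G.perp x y := ⟨hvx, hv_perp.1⟩
      have hpe : G.perp x a = G.perp x y :=
        G.perp_x_eq hx hoxa hxy hu_xa hu_xy hv_xa hv_xy (G.opp_ne huv)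
      have hsub : G.perp y x ⊆ G.perp y a := by
        intro w hw
        have hwxy : w ∈ G.perp x y := ⟨hw.2, hw.1⟩
        have hwxa : w ∈ G.perp x a := hpe.symm ▸ hwxy
        exact ⟨hw.1, hwxa.2⟩
      have heq : G.perp y x = G.perp y a :=
        G.perp_eq_of_subset (G.opp_symm hxy) ha hsub
      refine ⟨x, G.collinear_refl x, ?_⟩
      intro w hw
      have hw' : w ∈ G.perp y x := heq.symm ▸ hw
      exact G.collinear_symm hw'.2
    · -- u ~ x, v opposite x : project v onto the line xu
      have hux' : u ≠ x := by
        rintro rfl; exact hxy hu_perp.1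
      obtain ⟨e, hue, hxe⟩ := hux
      have hve : ¬ G.inc v e := by
        intro h
        exact huv (G.collinear_symm ⟨e, h, hue⟩)
      obtain ⟨ξ, ⟨hξe, hξv⟩, _⟩ := G.proj_pt v e hve
      have hξx : ξ ≠ x := by
        rintro rfl; exact hvx (G.collinear_symm hξv)
      have hξu : ξ ≠ u := by
        rintro rfl; exact huv hξv
      have hξmem : ξ ∈ G.perp u v := ⟨⟨e, hξe, hue⟩, hξv⟩
      exact ⟨ξ, ⟨e, hξe, hxe⟩, hspan.symm ▸ hξmem⟩
  · by_cases hvx : G.collinear v x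
    · -- symmetric: v ~ x, u opposite x
      have hvx' : v ≠ x := by
        rintro rfl; exact hxy hv_perp.1
      obtain ⟨e, hve, hxe⟩ := hvx
      have hue : ¬ G.inc u e := by
        intro h
        exact huv ⟨e, h, hve⟩
      obtain ⟨ξ, ⟨hξe, hξu⟩, _⟩ := G.proj_pt u e hue
      have hξx : ξ ≠ x := by
        rintro rfl; exact hux (G.collinear_symm hξu)
      have hξmem : ξ ∈ G.perp u v := ⟨hξu, ⟨e, hξe, hve⟩⟩
      exact ⟨ξ, ⟨e, hξe, hxe⟩, hspan.symm ▸ hξmem⟩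
    · -- both u,v opposite x : use the projectivity of x directly
      have hoxu : G.opp x u := fun h => hux (G.collinear_symm h)
      have hoxv : G.opp x v := fun h => hvx (G.collinear_symm h)
      have huy : u ≠ y := by
        rintro rfl; exact ha hu_perp.2
      obtain ⟨f, huf, hyf⟩ := hu_perp.1
      have hxf : ¬ G.inc x f := fun h => hxy ⟨f, h, hyf⟩
      obtain ⟨k, ⟨hkf, hkx⟩, _⟩ := G.proj_pt x f hxf
      have hky : k ≠ y := by
        rintro rfl; exact hxy (G.collinear_symm hkx)
      have hku : k ≠ u := by
        rintro rfl; exact hux hkx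
      have hpne : G.perp x u ≠ G.perp x v := by
        intro he
        have hkpu : k ∈ G.perp x u := ⟨hkx, ⟨f, hkf, huf⟩⟩
        have hkpv : k ∈ G.perp x v := he ▸ hkpu
        have hvf : ¬ G.inc v f := by
          intro h
          exact huv ⟨f, huf, h⟩
        exact G.no_triangle hyf hkf hky.symm hvf
          hv_perp.1 (G.collinear_symm hkpv.2)
      obtain ⟨ζ, ⟨hζu, hζv⟩, _⟩ := hx.2 u v hoxu hoxv hpne
      have hζmem : ζ ∈ G.perp u v := ⟨hζu.2, hζv.2⟩
      exact ⟨ζ, hζu.1, hspan.symm ▸ hζmem⟩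

/-- THE KEY LEMMA: a regular point opposite a projective point is projective. -/
lemma projective_of_opp {x y : G.P} (hx : G.projective x) (hxy : G.opp x y)
    (hy : G.regular y) : G.projective y := by
  refine ⟨hy, ?_⟩
  intro a b hya hyb hne
  obtain ⟨z₁, hz₁x, hz₁s⟩ := G.xrep hx hxy hy hya
  obtain ⟨z₂, hz₂x, hz₂s⟩ := G.xrep hx hxy hy hyb
  have hz₁y : z₁ ≠ y := by
    rintro rfl; exact hxy (G.collinear_symm hz₁x)
  have hz₂y : z₂ ≠ y := by
    rintro rfl; exact hxy (G.collinear_symm hz₂x)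
  obtain ⟨o1, e1⟩ := G.span_perp_eq hya hz₁s hz₁y
  obtain ⟨o2, e2⟩ := G.span_perp_eq hyb hz₂s hz₂y
  have h12 : z₁ ≠ z₂ := by
    rintro rfl
    exact hne (e1.symm.trans e2)
  obtain ⟨θ, t1, t2⟩ := G.special_exists hx hxy hz₁x hz₂x o1 o2 h12
  refine ⟨θ, ⟨e1 ▸ t1, e2 ▸ t2⟩, ?_⟩
  rintro w ⟨w1, w2⟩
  exact G.special_unique hx hxy hz₁x hz₂x o1 o2 h12
    (e1.symm ▸ w1) (e2.symm ▸ w2) t1 t2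

end GenQuadrangle

private lemma second_of_not_unique {α : Sort*} {Q : α → Prop} (h : ¬ ∃! z, Q z) {q : α}
    (hq : Q q) : ∃ t, Q t ∧ t ≠ q := by
  by_contra h2
  push_neg at h2
  exact h ⟨q, hq, fun t ht => h2 t ht⟩

/-- Let Γ be a generalized quadrangle and O a set of regular points
satisfying (PP): at least one member of O is projective, and (TP): for all opposite
points x,y, |{x,y}^⊥ ∩ O| ≠ 1. Then every element of O is a projective point. -/
theorem all_points_of_O_projective
    (G : GenQuadrangle) (O : Set G.P)
    (hreg : ∀ p ∈ O, G.regular p)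
    -- (PP)
    (hPP : ∃ p ∈ O, G.projective p)
    -- (TP): |{x,y}^⊥ ∩ O| ≠ 1
    (hTP : ∀ x y : G.P, G.opp x y → ¬ ∃! z : G.P, z ∈ G.perp x y ∧ z ∈ O) :
    ∀ p ∈ O, G.projective p := by
  obtain ⟨p, hpO, hp⟩ := hPP
  intro q hqO
  by_cases hpq : G.collinear p q
  case neg => exact G.projective_of_opp hp hpq (hreg q hqO)
  case pos =>
    -- q is collinear with p; first produce a point t ∈ O opposite q
    obtain ⟨l₁, l₂, l₃, h12, _, _, q1, q2, _⟩ := G.thickPt q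
    obtain ⟨x₀, hx₀l, hx₀q, _⟩ := G.exists_pt_on_line_ne l₁ q q
    obtain ⟨y₀, hy₀l, hy₀q, _⟩ := G.exists_pt_on_line_ne l₂ q q
    have hoxy : G.opp x₀ y₀ := G.opp_of_two_lines q1 q2 hx₀l hy₀l h12 hx₀q hy₀q
    have hqperp : q ∈ G.perp x₀ y₀ := ⟨⟨l₁, q1, hx₀l⟩, ⟨l₂, q2, hy₀l⟩⟩
    obtain ⟨t, ⟨htperp, htO⟩, htq⟩ :=
      second_of_not_unique (hTP x₀ y₀ hoxy) ⟨hqperp, hqO⟩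
    have hotq : G.opp t q := G.opp_of_mem_perp hoxy htperp hqperp htq
    by_cases htp : G.collinear t p
    case neg =>
      have ht : G.projective t :=
        G.projective_of_opp hp (fun h => htp (G.collinear_symm h)) (hreg t htO)
      exact G.projective_of_opp ht hotq (hreg q hqO)
    case pos =>
      -- t ~ p; produce r ∈ O opposite both p and t
      obtain ⟨m, htm, hpm⟩ := htp
      obtain ⟨n, hpn, hnm⟩ := G.exists_line_ne p m
      have htp_ne : t ≠ p := by
        rintro rfl
        exact hotq hpq
      obtain ⟨x₁, hx₁m, hx₁t, hx₁p⟩ := G.exists_pt_on_line_ne m t p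
      obtain ⟨y₁, hy₁n, hy₁p, _⟩ := G.exists_pt_on_line_ne n p p
      have hoxy1 : G.opp x₁ y₁ :=
        G.opp_of_two_lines hpm hpn hx₁m hy₁n (Ne.symm hnm) hx₁p hy₁p
      have hpperp : p ∈ G.perp x₁ y₁ := ⟨⟨m, hpm, hx₁m⟩, ⟨n, hpn, hy₁n⟩⟩
      obtain ⟨r, ⟨hrperp, hrO⟩, hrp⟩ :=
        second_of_not_unique (hTP x₁ y₁ hoxy1) ⟨hpperp, hpO⟩
      have horp : G.opp r p := G.opp_of_mem_perp hoxy1 hrperp hpperp hrp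
      have hr : G.projective r := G.projective_of_opp hp (G.opp_symm horp) (hreg r hrO)
      have hort : G.opp r t := by
        intro hrt
        have hrm : ¬ G.inc r m := fun h => horp ⟨m, h, hpm⟩
        exact G.no_triangle hx₁m htm hx₁t hrm hrperp.1 hrt
      have ht : G.projective t := G.projective_of_opp hr hort (hreg t htO)
      exact G.projective_of_opp ht hotq (hreg q hqO)
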